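/- For the GFSGA*_{(2)} mode with sampling steps cycling through the consecutive differences (σ_1, ..., σ_{n-1}) = (d_1, ..., d_{n-1}), at the j-th sampling instance (1 ≤ j ≤ n-1) the number of repeated bits satisfies q_j ≥ j; consequently the total number of repeated equations over the first n-1 sampled outputs after the initial one is at least 1 + 2 + ... + (n-1) = n(n-1)/2. -/

import Mathlib

/-- GFSGA*₍₂₎ mode: sampling steps cycle through the consecutive differences
`d j = l (j+1) - l j`.  With `t 0 = 0` and `t (j+1) = t j + d j`, and shifted
tap states `S j = I₀ + t j`, the number of repeated bits at the `j`-th sampling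
instance satisfies `q j ≥ j` for `1 ≤ j ≤ n - 1`, and hence the total number of
repeated equations over these samplings is at least `n(n-1)/2`. -/
theorem stmt_8 (n : ℕ) (hn : 1 ≤ n) (l t : ℕ → ℤ)
    (hmono : ∀ i j, i < j → j < n → l i < l j)
    (ht0 : t 0 = 0) (ht : ∀ j, t (j + 1) = t j + (l (j + 1) - l j))
    (S : ℕ → Finset ℤ)
    (hS : ∀ j, S j = (Finset.range n).image (fun i => l i + t j))
    (q : ℕ → ℕ)
    (hq : ∀ j, q j = (((Finset.range j).biUnion S) ∩ S j).card) :
    (∀ j, 1 ≤ j → j < n → j ≤ q j) ∧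
    n * (n - 1) / 2 ≤ ∑ j ∈ Finset.Icc 1 (n - 1), q j := by
  have htval : ∀ j, t j = l j - l 0 := by
    intro j
    induction j with
    | zero => simp [ht0]
    | succ k ih => rw [ht, ih]; ring
  have key : ∀ i j, l i + t j = l j + t i := by
    intro i j; rw [htval, htval]; ring
  have hlinj : ∀ i i', i < n → i' < n → l i = l i' → i = i' := by
    intro i i' hi hi' h
    rcases lt_trichotomy i i' with h1 | h1 | h1
    · exact absurd h (ne_of_lt (hmono _ _ h1 hi'))
    · exact h1
    · exact absurd h.symm (ne_of_lt (hmono _ _ h1 hi))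
  have main : ∀ j, 1 ≤ j → j < n → j ≤ q j := by
    intro j h1 hjn
    rw [hq]
    have hsub : (Finset.range j).image (fun i => l i + t j) ⊆
        ((Finset.range j).biUnion S) ∩ S j := by
      intro x hx
      simp only [Finset.mem_image, Finset.mem_range] at hx
      obtain ⟨i, hij, rfl⟩ := hx
      have hin : i < n := lt_trans hij hjn
      refine Finset.mem_inter.2 ⟨Finset.mem_biUnion.2 ⟨i, Finset.mem_range.2 hij, ?_⟩, ?_⟩
      · rw [hS, key]
        exact Finset.mem_image.2 ⟨j, Finset.mem_range.2 hjn, rfl⟩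
      · rw [hS]
        exact Finset.mem_image.2 ⟨i, Finset.mem_range.2 hin, rfl⟩
    have hcard : ((Finset.range j).image (fun i => l i + t j)).card = j := by
      rw [Finset.card_image_of_injOn, Finset.card_range]
      intro a ha b hb hab
      simp only [Finset.mem_coe, Finset.mem_range] at ha hb
      have : l a = l b := by linarith [add_left_injective (t j) hab]
      exact hlinj a b (lt_trans ha hjn) (lt_trans hb hjn) this
    calc j = ((Finset.range j).image (fun i => l i + t j)).card := hcard.symm
      _ ≤ _ := Finset.card_le_card hsub
  refine ⟨main, ?_⟩
  have hsum : ∑ j ∈ Finset.Icc 1 (n - 1), j ≤ ∑ j ∈ Finset.Icc 1 (n - 1), q j := by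
    apply Finset.sum_le_sum
    intro j hj
    rw [Finset.mem_Icc] at hj
    exact main j hj.1 (lt_of_le_of_lt hj.2 (Nat.sub_lt hn one_pos))
  refine le_trans ?_ hsum
  have hicc : Finset.Icc 1 (n - 1) = Finset.Ico 1 n := by
    rw [← Finset.Ico_add_one_right_eq_Icc]; congr 1; omega
  have hrange : ∑ j ∈ Finset.range n, j = ∑ j ∈ Finset.Icc 1 (n - 1), j := by
    rw [hicc, Finset.range_eq_Ico, ← Finset.insert_Ico_add_one_left_eq_Ico (by omega : 0 < n)]
    simp
  rw [← hrange]
  exact (Finset.sum_range_id n).ge
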